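/- Let α be badly approximable with q·‖qα‖ ≥ δ for all integers q ≥ 1. Then for every N ≥ 1 and every x ∈ ℝ, the points {x, x + α, x + 2α, …, x + ⌈N/δ⌉·α} are (1/N)-dense modulo 1. -/

import Mathlib

/-- Distance from a real number to the nearest integer. -/
noncomputable def nint (y : ℝ) : ℝ := |y - round y|

/-- If `α` is badly approximable with `q·‖qα‖ ≥ δ` for all `q ≥ 1`, then for
every `N ≥ 1` and every `x`, the points `x, x+α, …, x+⌈N/δ⌉·α` are `1/N`-dense
modulo 1. -/
theorem stmt_10 (α δ : ℝ) (hδ0 : 0 < δ) (hδ : δ < 1 / 2)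
    (hbad : ∀ q : ℕ, 1 ≤ q → δ ≤ (q : ℝ) * nint ((q : ℝ) * α)) :
    ∀ N : ℝ, 1 ≤ N → ∀ x z : ℝ,
      ∃ k : ℕ, k ≤ ⌈N / δ⌉₊ ∧ nint (x + (k : ℝ) * α - z) ≤ 1 / N := by
  intro N hN x z
  set M : ℕ := ⌈N / δ⌉₊ with hM
  have hN0 : (0:ℝ) < N := by linarith
  have hMge : N / δ ≤ (M : ℝ) := Nat.le_ceil _
  have hMpos : 0 < M := Nat.ceil_pos.mpr (by positivity)
  obtain ⟨q, hq, hden⟩ := Real.exists_rat_abs_sub_le_and_den_le α hMpos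
  set d : ℕ := q.den with hdd
  set p : ℤ := q.num with hpp
  have hd1 : 1 ≤ d := q.pos
  have hd0 : (0:ℝ) < (d:ℝ) := by exact_mod_cast q.pos
  have hcast : (q : ℝ) = (p : ℝ) / (d : ℝ) := by rw [Rat.cast_def]
  set η : ℝ := |(d:ℝ) * α - (p:ℝ)| with hη
  -- η ≤ 1/(M+1)
  have hη1 : η ≤ 1 / ((M:ℝ) + 1) := by
    have h1 : (d:ℝ) * α - (p:ℝ) = (d:ℝ) * (α - (q:ℝ)) := by
      rw [hcast]; field_simp
    rw [hη, h1, abs_mul, abs_of_pos hd0]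
    calc (d:ℝ) * |α - (q:ℝ)| ≤ (d:ℝ) * (1 / (((M:ℝ) + 1) * (d:ℝ))) := by
          apply mul_le_mul_of_nonneg_left _ hd0.le
          exact_mod_cast hq
      _ = 1 / ((M:ℝ) + 1) := by field_simp
  -- badness: δ ≤ d * η
  have hbd : δ ≤ (d:ℝ) * η := by
    have := hbad d hd1
    refine this.trans (mul_le_mul_of_nonneg_left ?_ hd0.le)
    exact round_le ((d:ℝ) * α) p
  -- M ≥ N/δ gives 1/(M+1) ≤ δ/N
  have hηδ : η ≤ δ / N := by
    have hNδM : N ≤ δ * (M:ℝ) := by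
      rw [div_le_iff₀ hδ0] at hMge; linarith [hMge]
    have : 1 / ((M:ℝ) + 1) ≤ δ / N := by
      rw [div_le_div_iff₀ (by positivity) hN0]
      nlinarith
    linarith [hη1]
  -- d ≥ N
  have hdN : N ≤ (d:ℝ) := by
    have hηN : η * N ≤ δ := by rwa [← le_div_iff₀ hN0]
    nlinarith [mul_le_mul_of_nonneg_left hηN hd0.le, mul_le_mul_of_nonneg_right hbd hN0.le]
  -- Bezout for coprime p, d
  have hcop : IsCoprime p (d:ℤ) := by
    rw [Int.isCoprime_iff_gcd_eq_one]
    simpa [Int.gcd] using q.reduced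
  obtain ⟨a, b, hab⟩ := hcop
  set y : ℝ := z - x with hy
  set j : ℤ := round ((d:ℝ) * y) with hj
  set k' : ℤ := (a * j) % (d:ℤ) with hk'
  have hdz : (d:ℤ) ≠ 0 := by
    have : d ≠ 0 := by omega
    exact_mod_cast this
  have hk'0 : 0 ≤ k' := Int.emod_nonneg _ hdz
  have hk'lt : k' < (d:ℤ) := Int.emod_lt_of_pos _ (by exact_mod_cast q.pos)
  set k : ℕ := k'.toNat with hk
  have hkZ : (k:ℤ) = k' := Int.toNat_of_nonneg hk'0
  have hkd : k < d := by omega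
  have hdvd : (d:ℤ) ∣ (k:ℤ) * p - j := by
    refine ⟨-(j * b + (a * j / d) * p), ?_⟩
    have hmod : k' = a * j - (d:ℤ) * (a * j / d) := by
      rw [hk', Int.emod_def]
    rw [hkZ, hmod]
    linear_combination j * hab
  obtain ⟨t, ht⟩ := hdvd
  have hkp : ((k:ℕ):ℝ) * (p:ℝ) = (j:ℝ) + (d:ℝ) * (t:ℝ) := by
    have : ((k:ℕ):ℤ) * p = j + (d:ℤ) * t := by linarith [ht]
    exact_mod_cast this
  refine ⟨k, le_of_lt (lt_of_lt_of_le hkd hden), ?_⟩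
  have hjy : |(j:ℝ) - (d:ℝ) * y| ≤ 1 / 2 := by
    have := abs_sub_round ((d:ℝ) * y)
    rw [abs_sub_comm] at this
    exact this
  -- key identity and bound (multiplied by d)
  have hkey : (d:ℝ) * |(k:ℝ) * α - y - (t:ℝ)| ≤ (d:ℝ) * η + 1 / 2 := by
    have hid : (d:ℝ) * ((k:ℝ) * α - y - (t:ℝ))
        = (k:ℝ) * ((d:ℝ) * α - (p:ℝ)) + ((j:ℝ) - (d:ℝ) * y) := by
      linear_combination hkp
    calc (d:ℝ) * |(k:ℝ) * α - y - (t:ℝ)| = |(d:ℝ) * ((k:ℝ) * α - y - (t:ℝ))| := by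
          rw [abs_mul, abs_of_pos hd0]
      _ = |(k:ℝ) * ((d:ℝ) * α - (p:ℝ)) + ((j:ℝ) - (d:ℝ) * y)| := by rw [hid]
      _ ≤ |(k:ℝ)| * η + |(j:ℝ) - (d:ℝ) * y| := by
          refine (abs_add_le _ _).trans ?_
          rw [abs_mul]
      _ ≤ (d:ℝ) * η + 1 / 2 := by
          have hk0 : (0:ℝ) ≤ (k:ℝ) := by positivity
          have hkled : (k:ℝ) ≤ (d:ℝ) := by exact_mod_cast hkd.le
          have hη0 : (0:ℝ) ≤ η := abs_nonneg _
          rw [abs_of_nonneg hk0]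
          nlinarith
  have hmain : |(k:ℝ) * α - y - (t:ℝ)| ≤ η + 1 / (2 * (d:ℝ)) := by
    rw [← mul_le_mul_iff_of_pos_left hd0]
    calc (d:ℝ) * |(k:ℝ) * α - y - (t:ℝ)| ≤ (d:ℝ) * η + 1 / 2 := hkey
      _ = (d:ℝ) * (η + 1 / (2 * (d:ℝ))) := by field_simp
  have hfin : η + 1 / (2 * (d:ℝ)) ≤ 1 / N := by
    have h1 : 1 / (2 * (d:ℝ)) ≤ 1 / (2 * N) := by
      apply one_div_le_one_div_of_le (by positivity); linarith
    have e1 : δ / N = δ * (1 / N) := by ring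
    have e2 : 1 / (2 * N) = (1/2) * (1 / N) := by ring
    have hiN : (0:ℝ) < 1 / N := by positivity
    have h2 : δ / N + 1 / (2 * N) ≤ 1 / N := by
      rw [e1, e2]; nlinarith
    linarith [hηδ, h1]
  have hnint : nint (x + (k:ℝ) * α - z) ≤ |(k:ℝ) * α - y - (t:ℝ)| := by
    have h1 : x + (k:ℝ) * α - z - (t:ℝ) = (k:ℝ) * α - y - (t:ℝ) := by rw [hy]; ring
    have := round_le (x + (k:ℝ) * α - z) t
    rw [h1] at this
    exact this
  linarith [hnint, hmain, hfin]
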